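/- Let a, b, c be real numbers. Then there exist angles θ₁, θ₂, θ₃ in the open interval (0, π) with θ₁ + θ₂ + θ₃ = 2π such that a = sin θ₁, b = sin θ₂ and c = sin θ₃ if and only if a > 0, b > 0, c > 0 and a⁴ + b⁴ + c⁴ − 2a²b² − 2a²c² − 2b²c² + 4a²b²c² = 0. -/

import Mathlib

set_option maxHeartbeats 1000000


/-- Real numbers `a, b, c` are the sines of angles
`θ₁, θ₂, θ₃ ∈ (0, π)` with `θ₁ + θ₂ + θ₃ = 2π` iff `a, b, c > 0` and
`a⁴ + b⁴ + c⁴ − 2a²b² − 2a²c² − 2b²c² + 4a²b²c² = 0`. -/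
theorem stmt_18 (a b c : ℝ) :
    (∃ θ₁ θ₂ θ₃ : ℝ, θ₁ ∈ Set.Ioo 0 Real.pi ∧ θ₂ ∈ Set.Ioo 0 Real.pi
        ∧ θ₃ ∈ Set.Ioo 0 Real.pi ∧ θ₁ + θ₂ + θ₃ = 2 * Real.pi
        ∧ a = Real.sin θ₁ ∧ b = Real.sin θ₂ ∧ c = Real.sin θ₃) ↔
      (0 < a ∧ 0 < b ∧ 0 < c
        ∧ a ^ 4 + b ^ 4 + c ^ 4 - 2 * a ^ 2 * b ^ 2 - 2 * a ^ 2 * c ^ 2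
            - 2 * b ^ 2 * c ^ 2 + 4 * a ^ 2 * b ^ 2 * c ^ 2 = 0) := by
  constructor
  · rintro ⟨θ₁, θ₂, θ₃, ⟨h1l, h1u⟩, ⟨h2l, h2u⟩, ⟨h3l, h3u⟩, hsum, ha, hb, hc⟩
    refine ⟨ha ▸ Real.sin_pos_of_pos_of_lt_pi h1l h1u,
      hb ▸ Real.sin_pos_of_pos_of_lt_pi h2l h2u,
      hc ▸ Real.sin_pos_of_pos_of_lt_pi h3l h3u, ?_⟩
    set s1 := Real.sin θ₁
    set s2 := Real.sin θ₂
    set c1 := Real.cos θ₁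
    set c2 := Real.cos θ₂
    have hθ3 : θ₃ = 2 * Real.pi - (θ₁ + θ₂) := by linarith
    have hc' : c = -(s1 * c2 + c1 * s2) := by
      rw [hc, hθ3, Real.sin_sub, Real.sin_two_pi, Real.cos_two_pi, Real.sin_add]
      ring
    have h1 : s1 ^ 2 + c1 ^ 2 = 1 := Real.sin_sq_add_cos_sq θ₁
    have h2 : s2 ^ 2 + c2 ^ 2 = 1 := Real.sin_sq_add_cos_sq θ₂
    rw [ha, hb, hc']
    linear_combination (-s2^4 + c1^2*s2^4 + 4*s1*c1*s2^3*c2 - 2*s1^2*s2^2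
        + 6*s1^2*s2^2*c2^2 + 3*s1^2*s2^4) * h1
      + (4*s1^2*s2^2 + 4*s1^3*c1*s2*c2 - s1^4 + s1^4*c2^2 - 3*s1^4*s2^2) * h2
  · rintro ⟨ha, hb, hc, hP⟩
    set x : ℝ := (b ^ 2 + c ^ 2 - a ^ 2) / (2 * b * c) with hxdef
    set y : ℝ := (a ^ 2 + c ^ 2 - b ^ 2) / (2 * a * c) with hydef
    set z : ℝ := (a ^ 2 + b ^ 2 - c ^ 2) / (2 * a * b) with hzdef
    have ha' := ha.ne'
    have hb' := hb.ne'
    have hc' := hc.ne'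
    have hx2 : x ^ 2 = 1 - a ^ 2 := by
      rw [hxdef]; field_simp; linear_combination hP
    have hy2 : y ^ 2 = 1 - b ^ 2 := by
      rw [hydef]; field_simp; linear_combination hP
    have hz2 : z ^ 2 = 1 - c ^ 2 := by
      rw [hzdef]; field_simp; linear_combination hP
    have hxb : -1 < x ∧ x < 1 := by constructor <;> nlinarith [sq_nonneg (x-1), sq_nonneg (x+1)]
    have hyb : -1 < y ∧ y < 1 := by constructor <;> nlinarith [sq_nonneg (y-1), sq_nonneg (y+1)]
    have hzb : -1 < z ∧ z < 1 := by constructor <;> nlinarith [sq_nonneg (z-1), sq_nonneg (z+1)]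
    set A := Real.arccos x
    set B := Real.arccos y
    set C := Real.arccos z
    have hcA : Real.cos A = x := Real.cos_arccos hxb.1.le hxb.2.le
    have hcB : Real.cos B = y := Real.cos_arccos hyb.1.le hyb.2.le
    have hcC : Real.cos C = z := Real.cos_arccos hzb.1.le hzb.2.le
    have hsA : Real.sin A = a := by
      rw [Real.sin_arccos, hx2, show (1 : ℝ) - (1 - a ^ 2) = a ^ 2 by ring,
        Real.sqrt_sq ha.le]
    have hsB : Real.sin B = b := by
      rw [Real.sin_arccos, hy2, show (1 : ℝ) - (1 - b ^ 2) = b ^ 2 by ring,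
        Real.sqrt_sq hb.le]
    have hsC : Real.sin C = c := by
      rw [Real.sin_arccos, hz2, show (1 : ℝ) - (1 - c ^ 2) = c ^ 2 by ring,
        Real.sqrt_sq hc.le]
    have hA0 : 0 < A := Real.arccos_pos.2 hxb.2
    have hAπ : A < Real.pi := lt_of_le_of_ne (Real.arccos_le_pi x) (fun h => by have := Real.arccos_eq_pi.1 h; linarith [hxb.1])
    have hB0 : 0 < B := Real.arccos_pos.2 hyb.2
    have hBπ : B < Real.pi := lt_of_le_of_ne (Real.arccos_le_pi y) (fun h => by have := Real.arccos_eq_pi.1 h; linarith [hyb.1])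
    have hC0 : 0 < C := Real.arccos_pos.2 hzb.2
    have hCπ : C < Real.pi := lt_of_le_of_ne (Real.arccos_le_pi z) (fun h => by have := Real.arccos_eq_pi.1 h; linarith [hzb.1])
    have hsAB : Real.sin (A + B) = c := by
      rw [Real.sin_add, hsA, hsB, hcA, hcB, hxdef, hydef]
      field_simp
      ring
    have hABπ : A + B < Real.pi := by
      by_contra h
      push_neg at h
      have h1 : Real.sin (A + B - Real.pi) ≥ 0 :=
        Real.sin_nonneg_of_nonneg_of_le_pi (by linarith) (by linarith)
      rw [Real.sin_sub, Real.sin_pi, Real.cos_pi] at h1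
      nlinarith [hsAB]
    have hcAB : Real.cos (A + B) = Real.cos (Real.pi - C) := by
      rw [Real.cos_add, Real.cos_pi_sub, hsA, hsB, hcA, hcB, hcC,
        hxdef, hydef, hzdef]
      field_simp
      linear_combination (-1 : ℝ) * hP
    have hABC : A + B = Real.pi - C :=
      Real.injOn_cos ⟨by positivity, hABπ.le⟩ ⟨by linarith, by linarith⟩ hcAB
    refine ⟨Real.pi - A, Real.pi - B, Real.pi - C, ⟨by linarith, by linarith⟩,
      ⟨by linarith, by linarith⟩, ⟨by linarith, by linarith⟩, by linarith, ?_, ?_, ?_⟩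
    · rw [Real.sin_pi_sub, hsA]
    · rw [Real.sin_pi_sub, hsB]
    · rw [Real.sin_pi_sub, hsC]
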